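/- arXiv:2111.07388 — 6 statements merged into one kernel-verified Lean document; each statement's English description precedes it below -/
import Mathlib

section
/- Let (Ω, 𝒜, μ) be a probability space, let X, T, Y₀, Y₁ : Ω → ℝ be random variables with Y₀, Y₁ integrable, suppose T = 1{X ≥ 0} μ-almost surely (correct classification of treatment assignment with perfect compliance), and set Y := Y₀ + T·(Y₁ − Y₀). Let g₀, g₁ : ℝ → ℝ be Borel measurable functions such that gₜ ∘ X is a version of the conditional expectation of Yₜ given the σ-algebra generated by X, for t = 0, 1, and suppose g₀ and g₁ are continuous at 0. Define g(x) := g₁(x) if x ≥ 0 and g(x) := g₀(x) if x < 0. Then (i) g ∘ X is a version of the conditional expectation of Y given the σ-algebra generated by X, and (ii) g(x) tends to g₁(0) as x → 0 from the right and to g₀(0) as x → 0 from the left, so that the jump lim_{x↓0} g(x) − lim_{x↑0} g(x) equals g₁(0) − g₀(0). -/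
open MeasureTheory Filter Set Topology

/-- Sharp RD: if treatment equals the indicator `1{X ≥ 0}` a.s., the potential outcomes have
conditional means `g₀, g₁` given `X` that are continuous at `0`, then
`g(x) = g₁(x) 1{x ≥ 0} + g₀(x) 1{x < 0}` composed with `X` is a version of the conditional mean
of the observed outcome `Y = Y₀ + T (Y₁ - Y₀)` given `X`, and `g` tends to `g₁ 0` from the right
and `g₀ 0` from the left of the cutoff (so the jump is `g₁ 0 - g₀ 0`). -/
theorem stmt0 {Ω : Type*} [MeasurableSpace Ω] (μ : Measure Ω) [IsProbabilityMeasure μ]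
    (X T Y₀ Y₁ : Ω → ℝ) (hX : Measurable X) (hT : Measurable T)
    (hY₀m : Measurable Y₀) (hY₁m : Measurable Y₁)
    (hY₀i : Integrable Y₀ μ) (hY₁i : Integrable Y₁ μ)
    (hTX : T =ᵐ[μ] fun ω => if 0 ≤ X ω then (1 : ℝ) else 0)
    (Y : Ω → ℝ) (hY : Y = fun ω => Y₀ ω + T ω * (Y₁ ω - Y₀ ω))
    (g₀ g₁ : ℝ → ℝ) (hg₀m : Measurable g₀) (hg₁m : Measurable g₁)
    (hg₀ : (fun ω => g₀ (X ω)) =ᵐ[μ] μ[Y₀ | MeasurableSpace.comap X (borel ℝ)])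
    (hg₁ : (fun ω => g₁ (X ω)) =ᵐ[μ] μ[Y₁ | MeasurableSpace.comap X (borel ℝ)])
    (hc₀ : ContinuousAt g₀ 0) (hc₁ : ContinuousAt g₁ 0)
    (g : ℝ → ℝ) (hg : g = fun x => if 0 ≤ x then g₁ x else g₀ x) :
    ((fun ω => g (X ω)) =ᵐ[μ] μ[Y | MeasurableSpace.comap X (borel ℝ)]) ∧
      Tendsto g (𝓝[>] (0 : ℝ)) (𝓝 (g₁ 0)) ∧
      Tendsto g (𝓝[<] (0 : ℝ)) (𝓝 (g₀ 0)) := by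
  subst hY hg
  have hb : (borel ℝ) = (inferInstance : MeasurableSpace ℝ) := BorelSpace.measurable_eq.symm
  have hm : MeasurableSpace.comap X (borel ℝ) ≤ (inferInstance : MeasurableSpace Ω) := by
    rw [hb]; exact hX.comap_le
  set s : Set Ω := X ⁻¹' Ici 0 with hs_def
  have hs_m : MeasurableSet[MeasurableSpace.comap X (borel ℝ)] s := ⟨Ici 0, by rw [hb]; exact measurableSet_Ici, rfl⟩
  have hs : MeasurableSet s := hm _ hs_m
  have hsc_m : MeasurableSet[MeasurableSpace.comap X (borel ℝ)] sᶜ := hs_m.compl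
  have hYY' : (fun ω => Y₀ ω + T ω * (Y₁ ω - Y₀ ω)) =ᵐ[μ]
      (fun ω => s.indicator Y₁ ω + sᶜ.indicator Y₀ ω) := by
    filter_upwards [hTX] with ω hω
    by_cases h : 0 ≤ X ω <;>
      simp [hω, h, Set.indicator_apply, hs_def]
  have hi1 : Integrable (s.indicator Y₁) μ := hY₁i.indicator hs
  have hi0 : Integrable (sᶜ.indicator Y₀) μ := hY₀i.indicator hs.compl
  have key : (fun ω => if 0 ≤ X ω then g₁ (X ω) else g₀ (X ω)) =ᵐ[μ]
      μ[(fun ω => Y₀ ω + T ω * (Y₁ ω - Y₀ ω)) | MeasurableSpace.comap X (borel ℝ)] := by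
    have h1 : μ[(fun ω => Y₀ ω + T ω * (Y₁ ω - Y₀ ω)) | MeasurableSpace.comap X (borel ℝ)] =ᵐ[μ]
        μ[(fun ω => s.indicator Y₁ ω + sᶜ.indicator Y₀ ω) | MeasurableSpace.comap X (borel ℝ)] := condExp_congr_ae hYY'
    have h2 : μ[(fun ω => s.indicator Y₁ ω + sᶜ.indicator Y₀ ω) | MeasurableSpace.comap X (borel ℝ)] =ᵐ[μ]
        μ[s.indicator Y₁ | MeasurableSpace.comap X (borel ℝ)] + μ[sᶜ.indicator Y₀ | MeasurableSpace.comap X (borel ℝ)] := condExp_add hi1 hi0 _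
    have h3 : μ[s.indicator Y₁ | MeasurableSpace.comap X (borel ℝ)] =ᵐ[μ] s.indicator (μ[Y₁ | MeasurableSpace.comap X (borel ℝ)]) :=
      condExp_indicator hY₁i hs_m
    have h4 : μ[sᶜ.indicator Y₀ | MeasurableSpace.comap X (borel ℝ)] =ᵐ[μ] sᶜ.indicator (μ[Y₀ | MeasurableSpace.comap X (borel ℝ)]) :=
      condExp_indicator hY₀i hsc_m
    refine EventuallyEq.symm (h1.trans (h2.trans ?_))
    filter_upwards [h3, h4, hg₀, hg₁] with ω e3 e4 e0 e1
    by_cases h : 0 ≤ X ω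
    · have hωs : ω ∈ s := h
      simp only [Pi.add_apply, e3, e4, Set.indicator_of_mem hωs,
        Set.indicator_of_notMem (by simp [hωs] : ω ∉ sᶜ), add_zero, h, if_true]
      exact e1.symm
    · have hωs : ω ∉ s := h
      simp only [Pi.add_apply, e3, e4, Set.indicator_of_notMem hωs,
        Set.indicator_of_mem (by simp [hωs] : ω ∈ sᶜ), zero_add, h, if_false]
      exact e0.symm
  refine ⟨key, ?_, ?_⟩
  · refine Tendsto.congr' ?_ (hc₁.continuousWithinAt.tendsto)
    filter_upwards [self_mem_nhdsWithin] with x hx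
    simp [le_of_lt (mem_Ioi.mp hx)]
  · refine Tendsto.congr' ?_ (hc₀.continuousWithinAt.tendsto)
    filter_upwards [self_mem_nhdsWithin] with x hx
    simp [not_le.mpr (mem_Iio.mp hx)]
end

section
/- Let (Ω, 𝒜, μ) be a probability space, X, T, Y₀, Y₁ : Ω → ℝ random variables with Y₀, Y₁ integrable, T = 1{X ≥ 0} μ-almost surely, and Y := Y₀ + T·(Y₁ − Y₀). Let g₀, g₁ : ℝ → ℝ be versions of the conditional means of Y₀ and Y₁ given X, respectively, each continuous at 0, and define g(x) := g₁(x) if x ≥ 0 and g(x) := g₀(x) if x < 0. If additionally μ({X = 0}) > 0, then lim_{x↓0} g(x) − lim_{x↑0} g(x) = (∫_{{X = 0}} (Y₁ − Y₀) dμ) / μ({X = 0}); that is, the jump of the conditional mean of the observed outcome at the cutoff identifies the average treatment effect for units with X = 0. -/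
open MeasureTheory Filter Set Topology

/-- Sharp RD with an atom at the cutoff: the jump of the conditional mean of the observed
outcome at the cutoff, `lim_{x↓0} g(x) − lim_{x↑0} g(x)`, identifies the average treatment
effect for units with `X = 0`. -/
theorem stmt2 {Ω : Type*} [MeasurableSpace Ω] (μ : Measure Ω) [IsProbabilityMeasure μ]
    (X T Y₀ Y₁ : Ω → ℝ) (hX : Measurable X) (hT : Measurable T)
    (hY₀m : Measurable Y₀) (hY₁m : Measurable Y₁)
    (hY₀i : Integrable Y₀ μ) (hY₁i : Integrable Y₁ μ)
    (hTX : T =ᵐ[μ] fun ω => if 0 ≤ X ω then (1 : ℝ) else 0)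
    (Y : Ω → ℝ) (hY : Y = fun ω => Y₀ ω + T ω * (Y₁ ω - Y₀ ω))
    (g₀ g₁ : ℝ → ℝ) (hg₀m : Measurable g₀) (hg₁m : Measurable g₁)
    (hg₀ : (fun ω => g₀ (X ω)) =ᵐ[μ] μ[Y₀ | MeasurableSpace.comap X (borel ℝ)])
    (hg₁ : (fun ω => g₁ (X ω)) =ᵐ[μ] μ[Y₁ | MeasurableSpace.comap X (borel ℝ)])
    (hc₀ : ContinuousAt g₀ 0) (hc₁ : ContinuousAt g₁ 0)
    (g : ℝ → ℝ) (hg : g = fun x => if 0 ≤ x then g₁ x else g₀ x)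
    (hatom : 0 < μ {ω | X ω = 0}) :
    Tendsto g (𝓝[>] (0 : ℝ)) (𝓝 (g₁ 0)) ∧
      Tendsto g (𝓝[<] (0 : ℝ)) (𝓝 (g₀ 0)) ∧
      g₁ 0 - g₀ 0 =
        (∫ ω in {ω | X ω = 0}, (Y₁ ω - Y₀ ω) ∂μ) / (μ {ω | X ω = 0}).toReal := by
  subst hg
  have hb : (borel ℝ) = (inferInstance : MeasurableSpace ℝ) := (BorelSpace.measurable_eq).symm
  have hm : MeasurableSpace.comap X (borel ℝ) ≤ ‹MeasurableSpace Ω› := by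
    rintro s ⟨t, ht, rfl⟩
    rw [hb] at ht
    exact hX ht
  haveI : SigmaFinite (μ.trim hm) := by
    have : IsFiniteMeasure (μ.trim hm) := isFiniteMeasure_trim hm
    infer_instance
  set s := {ω | X ω = 0} with hs_def
  have hsm : MeasurableSet[MeasurableSpace.comap X (borel ℝ)] s := ⟨{0}, by rw [hb]; exact measurableSet_singleton 0, rfl⟩
  have hs : MeasurableSet s := hm s hsm
  have key : ∀ (Z : Ω → ℝ) (h : ℝ → ℝ), Integrable Z μ →
      (fun ω => h (X ω)) =ᵐ[μ] μ[Z | MeasurableSpace.comap X (borel ℝ)] →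
      ∫ ω in s, Z ω ∂μ = (μ s).toReal * h 0 := by
    intro Z h hZi hZ
    have h1 : ∫ ω in s, Z ω ∂μ = ∫ ω in s, (μ[Z | MeasurableSpace.comap X (borel ℝ)]) ω ∂μ :=
      (setIntegral_condExp hm hZi hsm).symm
    have h2 : ∫ ω in s, (μ[Z | MeasurableSpace.comap X (borel ℝ)]) ω ∂μ = ∫ ω in s, h (X ω) ∂μ :=
      setIntegral_congr_ae hs (hZ.symm.mono fun ω hω _ => hω)
    have h3 : ∫ ω in s, h (X ω) ∂μ = ∫ _ω in s, h 0 ∂μ :=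
      setIntegral_congr_fun hs (fun ω hω => by simp [hs_def] at hω; rw [hω])
    rw [h1, h2, h3, setIntegral_const, smul_eq_mul, measureReal_def]
  have h0 := key Y₀ g₀ hY₀i hg₀
  have h1 := key Y₁ g₁ hY₁i hg₁
  have hμpos : (0 : ℝ) < (μ s).toReal :=
    ENNReal.toReal_pos hatom.ne' (measure_ne_top μ s)
  refine ⟨?_, ?_, ?_⟩
  · apply (hc₁.continuousWithinAt (s := Ioi 0)).tendsto.congr'
    filter_upwards [self_mem_nhdsWithin] with x hx
    simp [le_of_lt (mem_Ioi.mp hx)]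
  · apply (hc₀.continuousWithinAt (s := Iio 0)).tendsto.congr'
    filter_upwards [self_mem_nhdsWithin] with x hx
    simp [not_le.mpr (mem_Iio.mp hx)]
  · have : ∫ ω in s, (Y₁ ω - Y₀ ω) ∂μ = (μ s).toReal * (g₁ 0 - g₀ 0) := by
      rw [integral_sub (hY₁i.restrict) (hY₀i.restrict), h0, h1]
      ring
    rw [this]
    field_simp
end

section
/- Let (Ω, 𝒜, μ) be a probability space, let X, Y₀, Y₁ : Ω → ℝ be random variables with Y₀, Y₁ integrable, and let T₀, T₁ : Ω → ℝ be random variables taking values in {0, 1} (potential treatments). Suppose 1{X ≥ 0} = Z μ-almost surely where Z is the treatment assignment, the observed treatment is T := Z·T₁ + (1 − Z)·T₀, and the observed outcome is Y := Y₀ + T·(Y₁ − Y₀). Let g₀, g₁ : ℝ → ℝ be versions of the conditional means of Y₀ + T₀·(Y₁ − Y₀) and Y₀ + T₁·(Y₁ − Y₀) given X, respectively, each continuous at 0, and define g(x) := g₁(x) if x ≥ 0 and g(x) := g₀(x) if x < 0. If μ({X = 0}) > 0 and T₁ ≥ T₀ μ-almost surely on {X = 0} (no defiers), then g ∘ X is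 a version of the conditional mean of Y given X, and lim_{x↓0} g(x) − lim_{x↑0} g(x) = (∫_{{X = 0}} (Y₁ − Y₀)·1{T₁ > T₀} dμ) / μ({X = 0}). -/
open MeasureTheory Filter Set Topology

/-- Fuzzy RD, reduced form: with treatment assignment `Z = 1{X ≥ 0}` a.s., observed treatment
`T = Z T₁ + (1 - Z) T₀` and observed outcome `Y = Y₀ + T (Y₁ - Y₀)`, if `g₀, g₁` are versions of
the conditional means of `Y₀ + T₀ (Y₁ - Y₀)` and `Y₀ + T₁ (Y₁ - Y₀)` given `X`, continuous at
`0`, there are no defiers on `{X = 0}` and `μ{X = 0} > 0`, then `g ∘ X` is a version of the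
conditional mean of `Y` given `X` and the jump of `g` at the cutoff equals
`E[(Y₁ - Y₀) 1{T₁ > T₀} | X = 0]`. -/
theorem stmt4 {Ω : Type*} [MeasurableSpace Ω] (μ : Measure Ω) [IsProbabilityMeasure μ]
    (X Y₀ Y₁ T₀ T₁ Z : Ω → ℝ) (hX : Measurable X)
    (hY₀m : Measurable Y₀) (hY₁m : Measurable Y₁)
    (hY₀i : Integrable Y₀ μ) (hY₁i : Integrable Y₁ μ)
    (hT₀m : Measurable T₀) (hT₁m : Measurable T₁) (hZm : Measurable Z)
    (hT₀01 : ∀ ω, T₀ ω = 0 ∨ T₀ ω = 1) (hT₁01 : ∀ ω, T₁ ω = 0 ∨ T₁ ω = 1)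
    (hZ : (fun ω => if 0 ≤ X ω then (1 : ℝ) else 0) =ᵐ[μ] Z)
    (T : Ω → ℝ) (hT : T = fun ω => Z ω * T₁ ω + (1 - Z ω) * T₀ ω)
    (Y : Ω → ℝ) (hY : Y = fun ω => Y₀ ω + T ω * (Y₁ ω - Y₀ ω))
    (g₀ g₁ : ℝ → ℝ) (hg₀m : Measurable g₀) (hg₁m : Measurable g₁)
    (hg₀ : (fun ω => g₀ (X ω)) =ᵐ[μ]
      μ[(fun ω => Y₀ ω + T₀ ω * (Y₁ ω - Y₀ ω)) | MeasurableSpace.comap X (borel ℝ)])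
    (hg₁ : (fun ω => g₁ (X ω)) =ᵐ[μ]
      μ[(fun ω => Y₀ ω + T₁ ω * (Y₁ ω - Y₀ ω)) | MeasurableSpace.comap X (borel ℝ)])
    (hc₀ : ContinuousAt g₀ 0) (hc₁ : ContinuousAt g₁ 0)
    (g : ℝ → ℝ) (hg : g = fun x => if 0 ≤ x then g₁ x else g₀ x)
    (hatom : 0 < μ {ω | X ω = 0})
    (hmono : ∀ᵐ ω ∂μ, X ω = 0 → T₀ ω ≤ T₁ ω) :
    ((fun ω => g (X ω)) =ᵐ[μ] μ[Y | MeasurableSpace.comap X (borel ℝ)]) ∧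
      Tendsto g (𝓝[>] (0 : ℝ)) (𝓝 (g₁ 0)) ∧
      Tendsto g (𝓝[<] (0 : ℝ)) (𝓝 (g₀ 0)) ∧
      g₁ 0 - g₀ 0 =
        (∫ ω in {ω | X ω = 0}, (Y₁ ω - Y₀ ω) * (if T₀ ω < T₁ ω then (1 : ℝ) else 0) ∂μ) /
          (μ {ω | X ω = 0}).toReal := by
  have hb : (borel ℝ) = (inferInstance : MeasurableSpace ℝ) := (BorelSpace.measurable_eq).symm
  rw [hb] at hg₀ hg₁ ⊢
  have hm : MeasurableSpace.comap X (inferInstance : MeasurableSpace ℝ) ≤ ‹MeasurableSpace Ω› :=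
    fun s ⟨t, ht, hts⟩ => hts ▸ hX ht
  set W₀ : Ω → ℝ := fun ω => Y₀ ω + T₀ ω * (Y₁ ω - Y₀ ω) with hW₀
  set W₁ : Ω → ℝ := fun ω => Y₀ ω + T₁ ω * (Y₁ ω - Y₀ ω) with hW₁
  have hY10 : Integrable (fun ω => Y₁ ω - Y₀ ω) μ := hY₁i.sub hY₀i
  have hW₀i : Integrable W₀ μ :=
    hY₀i.add (hY10.bdd_mul hT₀m.aestronglyMeasurable (c := 1)
      (ae_of_all _ fun ω => by rcases hT₀01 ω with h | h <;> simp [h]))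
  have hW₁i : Integrable W₁ μ :=
    hY₀i.add (hY10.bdd_mul hT₁m.aestronglyMeasurable (c := 1)
      (ae_of_all _ fun ω => by rcases hT₁01 ω with h | h <;> simp [h]))
  set A : Set Ω := {ω | 0 ≤ X ω} with hAdef
  have hA : MeasurableSet[MeasurableSpace.comap X (inferInstance : MeasurableSpace ℝ)] A :=
    ⟨Ici 0, measurableSet_Ici, rfl⟩
  set W : Ω → ℝ := fun ω => A.indicator W₁ ω + Aᶜ.indicator W₀ ω with hWdef
  have hYW : Y =ᵐ[μ] W := by
    filter_upwards [hZ] with ω hω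
    by_cases h : 0 ≤ X ω
    · simp only [hY, hT, ← hω, if_pos h, hWdef, Set.indicator_apply, hAdef,
        Set.mem_compl_iff, Set.mem_setOf_eq, hW₀, hW₁]
      simp only [h, if_true, if_pos, not_true, if_neg, if_false, not_le] at *
      simp [h] <;> ring
    · simp only [hY, hT, ← hω, if_neg h, hWdef, Set.indicator_apply, hAdef,
        Set.mem_compl_iff, Set.mem_setOf_eq, hW₀, hW₁]
      simp [h] <;> ring
  have part1 : (fun ω => g (X ω)) =ᵐ[μ]
      μ[Y | MeasurableSpace.comap X (inferInstance : MeasurableSpace ℝ)] := by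
    have e1 : μ[Y | MeasurableSpace.comap X (inferInstance : MeasurableSpace ℝ)] =ᵐ[μ]
        μ[W | MeasurableSpace.comap X (inferInstance : MeasurableSpace ℝ)] :=
      condExp_congr_ae hYW
    have e2 : μ[W | MeasurableSpace.comap X (inferInstance : MeasurableSpace ℝ)] =ᵐ[μ]
        fun ω => (μ[A.indicator W₁ | MeasurableSpace.comap X (inferInstance : MeasurableSpace ℝ)]) ω
          + (μ[Aᶜ.indicator W₀ | MeasurableSpace.comap X (inferInstance : MeasurableSpace ℝ)]) ω :=
      condExp_add (hW₁i.indicator (hm _ hA)) (hW₀i.indicator (hm _ hA.compl)) _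
    have e3 := condExp_indicator (μ := μ) hW₁i hA
    have e4 := condExp_indicator (μ := μ) hW₀i hA.compl
    filter_upwards [e1, e2, e3, e4, hg₀, hg₁] with ω h1 h2 h3 h4 h5 h6
    rw [h1, h2, h3, h4]
    by_cases h : 0 ≤ X ω
    · rw [Set.indicator_of_mem (show ω ∈ A from h),
        Set.indicator_of_notMem (show ω ∉ Aᶜ from fun hc => hc h), ← h6]
      simp [hg, h]
    · rw [Set.indicator_of_notMem (show ω ∉ A from h),
        Set.indicator_of_mem (show ω ∈ Aᶜ from h), ← h5]
      simp [hg, h]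
  refine ⟨part1, ?_, ?_, ?_⟩
  · refine Tendsto.congr' ?_ (hc₁.continuousWithinAt (s := Ioi 0))
    filter_upwards [self_mem_nhdsWithin] with x hx
    simp [hg, le_of_lt (mem_Ioi.mp hx)]
  · refine Tendsto.congr' ?_ (hc₀.continuousWithinAt (s := Iio 0))
    filter_upwards [self_mem_nhdsWithin] with x hx
    simp [hg, not_le.mpr (mem_Iio.mp hx)]
  · set s : Set Ω := {ω | X ω = 0} with hsdef
    have hsm : MeasurableSet[MeasurableSpace.comap X (inferInstance : MeasurableSpace ℝ)] s :=
      ⟨{0}, measurableSet_singleton 0, rfl⟩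
    have hs0 : MeasurableSet s := hm _ hsm
    have key : ∀ (gi : ℝ → ℝ) (Wi : Ω → ℝ), Integrable Wi μ →
        ((fun ω => gi (X ω)) =ᵐ[μ]
          μ[Wi | MeasurableSpace.comap X (inferInstance : MeasurableSpace ℝ)]) →
        gi 0 * (μ s).toReal = ∫ ω in s, Wi ω ∂μ := by
      intro gi Wi hWi hgi
      have h1 : ∫ ω in s, gi (X ω) ∂μ =
          ∫ ω in s, (μ[Wi | MeasurableSpace.comap X (inferInstance : MeasurableSpace ℝ)]) ω ∂μ :=
        integral_congr_ae (ae_restrict_of_ae hgi)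
      have h2 :
          ∫ ω in s, (μ[Wi | MeasurableSpace.comap X (inferInstance : MeasurableSpace ℝ)]) ω ∂μ =
            ∫ ω in s, Wi ω ∂μ :=
        setIntegral_condExp hm hWi hsm
      have h3 : ∫ ω in s, gi (X ω) ∂μ = ∫ ω in s, gi 0 ∂μ := by
        refine setIntegral_congr_ae hs0 (ae_of_all _ fun ω hω => ?_)
        rw [show X ω = 0 from hω]
      rw [← h2, ← h1, h3, setIntegral_const, smul_eq_mul, mul_comm, measureReal_def]
    have k1 := key g₁ W₁ hW₁i hg₁
    have k0 := key g₀ W₀ hW₀i hg₀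
    have hsub : (g₁ 0 - g₀ 0) * (μ s).toReal = ∫ ω in s, (W₁ ω - W₀ ω) ∂μ := by
      rw [integral_sub hW₁i.restrict hW₀i.restrict, ← k1, ← k0]; ring
    have hint : ∫ ω in s, (W₁ ω - W₀ ω) ∂μ =
        ∫ ω in s, (Y₁ ω - Y₀ ω) * (if T₀ ω < T₁ ω then (1 : ℝ) else 0) ∂μ := by
      refine integral_congr_ae ?_
      filter_upwards [ae_restrict_of_ae (μ := μ) (s := s) hmono, ae_restrict_mem hs0]
        with ω hω hωs
      have hle := hω hωs
      rcases hT₀01 ω with h0 | h0 <;> rcases hT₁01 ω with h1 | h1 <;>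
        simp only [hW₀, hW₁, h0, h1] <;>
        first
          | (norm_num <;> ring1)
          | (rw [h0, h1] at hle
             exact absurd hle (by norm_num))
          | ring1
    have hpos : (0 : ℝ) < (μ s).toReal :=
      ENNReal.toReal_pos hatom.ne' (measure_ne_top μ s)
    rw [eq_div_iff hpos.ne', ← hint, ← hsub]
end

section
/- Let (Ω, 𝒜, μ) be a probability space, let X : Ω → ℝ be a random variable, and let T₀, T₁ : Ω → ℝ take values in {0, 1}. Suppose 1{X ≥ 0} = Z μ-almost surely, and the observed treatment is T := Z·T₁ + (1 − Z)·T₀. Let p₀, p₁ : ℝ → ℝ be versions of the conditional means of T₀ and T₁ given X, respectively, each continuous at 0, and define p(x) := p₁(x) if x ≥ 0 and p(x) := p₀(x) if x < 0. If μ({X = 0}) > 0 and T₁ ≥ T₀ μ-almost surely on {X = 0}, then p ∘ X is a version of the conditional mean of T given X, and lim_{x↓0} p(x) − lim_{x↑0} p(x) = μ({T₁ > T₀} ∩ {X = 0}) / μ({X = 0}), i.e., the jump in the first-stage conditional mean at the cutoff identifies the conditional probability of being a complier given X = 0. -/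
open MeasureTheory Filter Set Topology

/-- Fuzzy RD, first stage: with treatment assignment `Z = 1{X ≥ 0}` a.s. and observed treatment
`T = Z T₁ + (1 - Z) T₀`, if `p₀, p₁` are versions of the conditional means of `T₀` and `T₁`
given `X`, continuous at `0`, there are no defiers on `{X = 0}` and `μ{X = 0} > 0`, then
`p ∘ X` is a version of the conditional mean of `T` given `X`, and the jump of `p` at the
cutoff identifies the conditional probability of being a complier given `X = 0`. -/
theorem stmt5 {Ω : Type*} [MeasurableSpace Ω] (μ : Measure Ω) [IsProbabilityMeasure μ]
    (X T₀ T₁ Z : Ω → ℝ) (hX : Measurable X)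
    (hT₀m : Measurable T₀) (hT₁m : Measurable T₁) (hZm : Measurable Z)
    (hT₀01 : ∀ ω, T₀ ω = 0 ∨ T₀ ω = 1) (hT₁01 : ∀ ω, T₁ ω = 0 ∨ T₁ ω = 1)
    (hZ : (fun ω => if 0 ≤ X ω then (1 : ℝ) else 0) =ᵐ[μ] Z)
    (T : Ω → ℝ) (hT : T = fun ω => Z ω * T₁ ω + (1 - Z ω) * T₀ ω)
    (p₀ p₁ : ℝ → ℝ) (hp₀m : Measurable p₀) (hp₁m : Measurable p₁)
    (hp₀ : (fun ω => p₀ (X ω)) =ᵐ[μ] μ[T₀ | MeasurableSpace.comap X (borel ℝ)])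
    (hp₁ : (fun ω => p₁ (X ω)) =ᵐ[μ] μ[T₁ | MeasurableSpace.comap X (borel ℝ)])
    (hc₀ : ContinuousAt p₀ 0) (hc₁ : ContinuousAt p₁ 0)
    (p : ℝ → ℝ) (hp : p = fun x => if 0 ≤ x then p₁ x else p₀ x)
    (hatom : 0 < μ {ω | X ω = 0})
    (hmono : ∀ᵐ ω ∂μ, X ω = 0 → T₀ ω ≤ T₁ ω) :
    ((fun ω => p (X ω)) =ᵐ[μ] μ[T | MeasurableSpace.comap X (borel ℝ)]) ∧
      Tendsto p (𝓝[>] (0 : ℝ)) (𝓝 (p₁ 0)) ∧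
      Tendsto p (𝓝[<] (0 : ℝ)) (𝓝 (p₀ 0)) ∧
      p₁ 0 - p₀ 0 =
        (μ ({ω | T₀ ω < T₁ ω} ∩ {ω | X ω = 0})).toReal / (μ {ω | X ω = 0}).toReal := by
  have hbor : (borel ℝ) = (inferInstance : MeasurableSpace ℝ) :=
    (BorelSpace.measurable_eq (α := ℝ)).symm
  have hm : MeasurableSpace.comap X (borel ℝ) ≤ (inferInstance : MeasurableSpace Ω) := by
    rw [hbor]; exact hX.comap_le
  haveI : SigmaFinite (μ.trim hm) := by infer_instance
  -- measurability of X w.r.t. the comap σ-algebra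
  have hXm : Measurable[MeasurableSpace.comap X (borel ℝ)] X := by
    rw [measurable_iff_comap_le, hbor]
  -- indicator functions
  set q : ℝ → ℝ := fun x => if 0 ≤ x then (1 : ℝ) else 0 with hq_def
  set q' : ℝ → ℝ := fun x => if 0 ≤ x then (0 : ℝ) else 1 with hq'_def
  have hqm : Measurable q :=
    Measurable.ite measurableSet_Ici measurable_const measurable_const
  have hq'm : Measurable q' :=
    Measurable.ite measurableSet_Ici measurable_const measurable_const
  have hqXm : StronglyMeasurable[MeasurableSpace.comap X (borel ℝ)] (fun ω => q (X ω)) := by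
    have : Measurable[MeasurableSpace.comap X (borel ℝ)] (fun ω => q (X ω)) := hqm.comp hXm
    exact this.stronglyMeasurable
  have hq'Xm : StronglyMeasurable[MeasurableSpace.comap X (borel ℝ)] (fun ω => q' (X ω)) := by
    have : Measurable[MeasurableSpace.comap X (borel ℝ)] (fun ω => q' (X ω)) := hq'm.comp hXm
    exact this.stronglyMeasurable
  -- integrability facts
  have habs : ∀ (W : Ω → ℝ), (∀ ω, W ω = 0 ∨ W ω = 1) → ∀ ω, ‖W ω‖ ≤ 1 := by
    intro W hW ω; rcases hW ω with h | h <;> simp [h]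
  have hT₀int : Integrable T₀ μ :=
    (integrable_const (1 : ℝ)).mono' hT₀m.aestronglyMeasurable
      (ae_of_all _ (habs T₀ hT₀01))
  have hT₁int : Integrable T₁ μ :=
    (integrable_const (1 : ℝ)).mono' hT₁m.aestronglyMeasurable
      (ae_of_all _ (habs T₁ hT₁01))
  have hqbd : ∀ x, ‖q x‖ ≤ 1 := by
    intro x; rw [hq_def]; dsimp only; split <;> simp
  have hq'bd : ∀ x, ‖q' x‖ ≤ 1 := by
    intro x; rw [hq'_def]; dsimp only; split <;> simp
  have hprod1int : Integrable ((fun ω => q (X ω)) * T₁) μ := by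
    refine (integrable_const (1 : ℝ)).mono'
      (((hqm.comp hX).mul hT₁m).aestronglyMeasurable) (ae_of_all _ fun ω => ?_)
    calc ‖q (X ω) * T₁ ω‖ = ‖q (X ω)‖ * ‖T₁ ω‖ := norm_mul _ _
      _ ≤ 1 * 1 := mul_le_mul (hqbd _) (habs T₁ hT₁01 ω) (norm_nonneg _) zero_le_one
      _ = 1 := one_mul 1
  have hprod0int : Integrable ((fun ω => q' (X ω)) * T₀) μ := by
    refine (integrable_const (1 : ℝ)).mono'
      (((hq'm.comp hX).mul hT₀m).aestronglyMeasurable) (ae_of_all _ fun ω => ?_)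
    calc ‖q' (X ω) * T₀ ω‖ = ‖q' (X ω)‖ * ‖T₀ ω‖ := norm_mul _ _
      _ ≤ 1 * 1 := mul_le_mul (hq'bd _) (habs T₀ hT₀01 ω) (norm_nonneg _) zero_le_one
      _ = 1 := one_mul 1
  -- T agrees a.e. with the indicator decomposition
  have hTeq : T =ᵐ[μ] (fun ω => q (X ω)) * T₁ + (fun ω => q' (X ω)) * T₀ := by
    filter_upwards [hZ] with ω hω
    rw [hT]
    simp only [Pi.add_apply, Pi.mul_apply]
    rw [← hω, hq_def, hq'_def]
    dsimp only
    split <;> ring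
  -- Part 1
  have part1 : (fun ω => p (X ω)) =ᵐ[μ] μ[T | MeasurableSpace.comap X (borel ℝ)] := by
    have h1 : μ[(fun ω => q (X ω)) * T₁ | MeasurableSpace.comap X (borel ℝ)] =ᵐ[μ]
        (fun ω => q (X ω)) * μ[T₁ | MeasurableSpace.comap X (borel ℝ)] :=
      condExp_mul_of_stronglyMeasurable_left hqXm hprod1int hT₁int
    have h0 : μ[(fun ω => q' (X ω)) * T₀ | MeasurableSpace.comap X (borel ℝ)] =ᵐ[μ]
        (fun ω => q' (X ω)) * μ[T₀ | MeasurableSpace.comap X (borel ℝ)] :=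
      condExp_mul_of_stronglyMeasurable_left hq'Xm hprod0int hT₀int
    have hadd : μ[(fun ω => q (X ω)) * T₁ + (fun ω => q' (X ω)) * T₀ |
          MeasurableSpace.comap X (borel ℝ)] =ᵐ[μ]
        μ[(fun ω => q (X ω)) * T₁ | MeasurableSpace.comap X (borel ℝ)] +
          μ[(fun ω => q' (X ω)) * T₀ | MeasurableSpace.comap X (borel ℝ)] :=
      condExp_add hprod1int hprod0int _
    have hcongr : μ[T | MeasurableSpace.comap X (borel ℝ)] =ᵐ[μ]
        μ[(fun ω => q (X ω)) * T₁ + (fun ω => q' (X ω)) * T₀ |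
          MeasurableSpace.comap X (borel ℝ)] :=
      condExp_congr_ae hTeq
    filter_upwards [h1, h0, hadd, hcongr, hp₀, hp₁] with ω e1 e0 ea ec ep0 ep1
    rw [ec, ea, Pi.add_apply, e1, e0, Pi.mul_apply, Pi.mul_apply, ← ep0, ← ep1,
      hp, hq_def, hq'_def]
    dsimp only
    split <;> ring
  -- Parts 2, 3
  have part2 : Tendsto p (𝓝[>] (0 : ℝ)) (𝓝 (p₁ 0)) := by
    refine Tendsto.congr' ?_ (hc₁.continuousWithinAt.tendsto)
    filter_upwards [self_mem_nhdsWithin] with x (hx : 0 < x)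
    rw [hp]; simp [hx.le]
  have part3 : Tendsto p (𝓝[<] (0 : ℝ)) (𝓝 (p₀ 0)) := by
    refine Tendsto.congr' ?_ (hc₀.continuousWithinAt.tendsto)
    filter_upwards [self_mem_nhdsWithin] with x (hx : x < 0)
    rw [hp]; simp [not_le.mpr hx]
  -- Part 4
  have part4 : p₁ 0 - p₀ 0 =
      (μ ({ω | T₀ ω < T₁ ω} ∩ {ω | X ω = 0})).toReal / (μ {ω | X ω = 0}).toReal := by
    set s : Set Ω := {ω | X ω = 0} with hs_def
    have hsm : MeasurableSet[MeasurableSpace.comap X (borel ℝ)] s := by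
      refine ⟨{0}, ?_, rfl⟩
      rw [hbor]; exact measurableSet_singleton 0
    have hsM : MeasurableSet s := hm s hsm
    have hμs_ne : (μ s).toReal ≠ 0 :=
      (ENNReal.toReal_pos hatom.ne' (measure_ne_top μ s)).ne'
    -- value of the conditional mean at the atom
    have key : ∀ (W : Ω → ℝ) (g : ℝ → ℝ), Integrable W μ →
        (fun ω => g (X ω)) =ᵐ[μ] μ[W | MeasurableSpace.comap X (borel ℝ)] →
        g 0 * (μ s).toReal = ∫ ω in s, W ω ∂μ := by
      intro W g hWint hg
      have h1 : ∫ ω in s, g (X ω) ∂μ =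
          ∫ ω in s, (μ[W | MeasurableSpace.comap X (borel ℝ)]) ω ∂μ :=
        setIntegral_congr_ae hsM (hg.mono fun ω hω _ => hω)
      have h2 : ∫ ω in s, (μ[W | MeasurableSpace.comap X (borel ℝ)]) ω ∂μ
          = ∫ ω in s, W ω ∂μ :=
        setIntegral_condExp hm hWint hsm
      have h3 : ∫ ω in s, g (X ω) ∂μ = g 0 * (μ s).toReal := by
        rw [setIntegral_congr_fun (g := fun _ => g 0) hsM fun ω hω => by
          rw [show X ω = 0 from hω]]
        rw [setIntegral_const, smul_eq_mul, mul_comm]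
        rfl
      rw [← h3, h1, h2]
    have k1 : p₁ 0 * (μ s).toReal = ∫ ω in s, T₁ ω ∂μ := key T₁ p₁ hT₁int hp₁
    have k0 : p₀ 0 * (μ s).toReal = ∫ ω in s, T₀ ω ∂μ := key T₀ p₀ hT₀int hp₀
    have hc : MeasurableSet {ω | T₀ ω < T₁ ω} := measurableSet_lt hT₀m hT₁m
    have hdiff : ∫ ω in s, (T₁ ω - T₀ ω) ∂μ =
        (μ ({ω | T₀ ω < T₁ ω} ∩ s)).toReal := by
      have hind : ∫ ω in s, (T₁ ω - T₀ ω) ∂μ =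
          ∫ ω in s, ({ω | T₀ ω < T₁ ω}).indicator (fun _ => (1 : ℝ)) ω ∂μ := by
        refine setIntegral_congr_ae hsM ?_
        filter_upwards [hmono] with ω hω hωs
        have hle : T₀ ω ≤ T₁ ω := hω hωs
        by_cases hlt : T₀ ω < T₁ ω
        · simp only [Set.indicator_apply, Set.mem_setOf_eq, if_pos hlt]
          rcases hT₀01 ω with h0 | h0 <;> rcases hT₁01 ω with h1 | h1 <;>
            rw [h0, h1] at hlt ⊢ <;> linarith
        · simp only [Set.indicator_apply, Set.mem_setOf_eq, if_neg hlt]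
          have heq : T₁ ω = T₀ ω := le_antisymm (not_lt.mp hlt) hle
          rw [heq]; ring
      rw [hind, setIntegral_indicator hc, setIntegral_const, smul_eq_mul, mul_one,
        Set.inter_comm]
      rfl
    have hsub : ∫ ω in s, (T₁ ω - T₀ ω) ∂μ =
        (∫ ω in s, T₁ ω ∂μ) - ∫ ω in s, T₀ ω ∂μ :=
      integral_sub (hT₁int.restrict) (hT₀int.restrict)
    rw [eq_div_iff hμs_ne, sub_mul, k1, k0, ← hsub, hdiff]
  exact ⟨part1, part2, part3, part4⟩
end

section
/- Let r ≥ 1 be a natural number and R > 0. Let f : ℝ × ℝ → ℝ satisfy f(e, x) = 0 whenever |e| > R, and suppose all mixed partial derivatives ∂_e^u ∂_x^v f with u + v ≤ r exist, are bounded, and are jointly continuous on ℝ². Let h : ℝ → ℝ be bounded and measurable. Then the function g(x) := ∫_ℝ h(y) f(y − x, x) dy is r-times differentiable at every x ∈ ℝ, and its r-th derivative satisfies g^{(r)}(x) = Σ_{u=0}^{r} binom(r, u) (−1)^u ∫_ℝ h(y) (∂_e^u ∂_x^{r−u} f)(y − x, x) dy. -/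
open MeasureTheory Filter Set Topology


lemma myHelper {φ A B : ℝ × ℝ → ℝ}
    (hA : ∀ e x : ℝ, HasDerivAt (fun e' => φ (e', x)) (A (e, x)) e)
    (hB : ∀ e x : ℝ, HasDerivAt (fun x' => φ (e, x')) (B (e, x)) x)
    (hAc : Continuous A) (y x : ℝ) :
    HasDerivAt (fun x' => φ (y - x', x')) (-A (y - x, x) + B (y - x, x)) x := by
  rw [hasDerivAt_iff_tendsto_slope]
  have key : ∀ x' : ℝ, x' ≠ x → ∃ ξ : ℝ, |ξ - (y - x)| ≤ |x' - x| ∧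
      slope (fun s => φ (y - s, s)) x x' =
        -A (ξ, x') + slope (fun s => φ (y - x, s)) x x' := by
    intro x' hx'
    have hne : x' - x ≠ 0 := sub_ne_zero.2 hx'
    have hcont : ContinuousOn (fun e => φ (e, x')) (Set.univ) :=
      fun e _ => (hA e x').continuousAt.continuousWithinAt
    rcases lt_or_gt_of_ne hx' with hlt | hgt
    · -- x' < x, so y - x < y - x'
      obtain ⟨c, hc, hceq⟩ := exists_hasDerivAt_eq_slope (fun e => φ (e, x'))
        (fun e => A (e, x')) (by linarith : y - x < y - x')
        (hcont.mono (Set.subset_univ _)) (fun e _ => hA e x')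
      refine ⟨c, ?_, ?_⟩
      · have habs : |x' - x| = x - x' := by rw [abs_of_neg (by linarith)]; ring
        rw [habs]
        exact abs_le.2 ⟨by linarith [hc.1], by linarith [hc.2]⟩
      · have hceq' : A (c, x') = (φ (y - x', x') - φ (y - x, x')) / ((y - x') - (y - x)) := hceq
        rw [slope_def_field, slope_def_field, hceq',
          show (y - x') - (y - x) = -(x' - x) from by ring, div_neg, neg_neg, ← add_div]
        congr 1
        ring
    · -- x < x', so y - x' < y - x
      obtain ⟨c, hc, hceq⟩ := exists_hasDerivAt_eq_slope (fun e => φ (e, x'))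
        (fun e => A (e, x')) (by linarith : y - x' < y - x)
        (hcont.mono (Set.subset_univ _)) (fun e _ => hA e x')
      refine ⟨c, ?_, ?_⟩
      · have habs : |x' - x| = x' - x := by rw [abs_of_pos (by linarith)]
        rw [habs]
        exact abs_le.2 ⟨by linarith [hc.1], by linarith [hc.2]⟩
      · have hceq' : A (c, x') = (φ (y - x, x') - φ (y - x', x')) / ((y - x) - (y - x')) := hceq
        rw [slope_def_field, slope_def_field, hceq',
          show (y - x) - (y - x') = x' - x from by ring, ← neg_div, ← add_div]
        congr 1
        ring
  classical
  set ξ : ℝ → ℝ := fun x' => if hcase : x' = x then y - x else Classical.choose (key x' hcase) with hξdef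
  have hξ1 : ∀ x', |ξ x' - (y - x)| ≤ |x' - x| := by
    intro x'
    by_cases hcase : x' = x
    · simp [hξdef, hcase]
    · simpa [hξdef, hcase] using (Classical.choose_spec (key x' hcase)).1
  have hξ2 : ∀ x', x' ≠ x → slope (fun s => φ (y - s, s)) x x' =
      -A (ξ x', x') + slope (fun s => φ (y - x, s)) x x' := by
    intro x' hcase
    simpa [hξdef, hcase] using (Classical.choose_spec (key x' hcase)).2
  have htξ : Tendsto ξ (𝓝[≠] x) (𝓝 (y - x)) := by
    rw [tendsto_iff_dist_tendsto_zero]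
    have hb : Tendsto (fun x' : ℝ => |x' - x|) (𝓝[≠] x) (𝓝 0) := by
      have hcont2 : Continuous (fun x' : ℝ => |x' - x|) :=
        continuous_abs.comp (continuous_id.sub continuous_const)
      have h3 : Tendsto (fun x' : ℝ => |x' - x|) (𝓝 x) (𝓝 0) := by
        simpa using hcont2.tendsto x
      exact h3.mono_left nhdsWithin_le_nhds
    exact squeeze_zero (fun t => dist_nonneg) (fun t => by rw [Real.dist_eq]; exact hξ1 t) hb
  have htid : Tendsto (fun x' : ℝ => x') (𝓝[≠] x) (𝓝 x) :=
    tendsto_id.mono_left nhdsWithin_le_nhds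
  have htA : Tendsto (fun x' => -A (ξ x', x')) (𝓝[≠] x) (𝓝 (-A (y - x, x))) :=
    Tendsto.neg ((hAc.tendsto (y - x, x)).comp (htξ.prodMk_nhds htid))
  have htB : Tendsto (slope (fun s => φ (y - x, s)) x) (𝓝[≠] x) (𝓝 (B (y - x, x))) :=
    hasDerivAt_iff_tendsto_slope.1 (hB (y - x) x)
  refine (htA.add htB).congr' ?_
  filter_upwards [self_mem_nhdsWithin] with x' hx'
  exact (hξ2 x' hx').symm



lemma myPascal (k : ℕ) (T : ℕ → ℝ) :
    ∑ u ∈ Finset.range (k + 1), (k.choose u : ℝ) * (T u + T (u + 1)) =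
      ∑ u ∈ Finset.range (k + 2), ((k + 1).choose u : ℝ) * T u := by
  have e1 : ∑ u ∈ Finset.range (k + 2), ((k + 1).choose u : ℝ) * T u
      = ∑ u ∈ Finset.range (k + 1), (((k + 1).choose (u + 1) : ℝ) * T (u + 1))
        + ((k + 1).choose 0 : ℝ) * T 0 :=
    Finset.sum_range_succ' _ (k + 1)
  have e2 : ∑ u ∈ Finset.range (k + 2), (k.choose u : ℝ) * T u
      = ∑ u ∈ Finset.range (k + 1), ((k.choose (u + 1) : ℝ) * T (u + 1))
        + (k.choose 0 : ℝ) * T 0 :=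
    Finset.sum_range_succ' _ (k + 1)
  have e3 : ∑ u ∈ Finset.range (k + 2), (k.choose u : ℝ) * T u
      = ∑ u ∈ Finset.range (k + 1), (k.choose u : ℝ) * T u := by
    rw [Finset.sum_range_succ]
    simp
  have e4 : ∀ u ∈ Finset.range (k + 1), (((k + 1).choose (u + 1) : ℝ) * T (u + 1))
      = (k.choose u : ℝ) * T (u + 1) + (k.choose (u + 1) : ℝ) * T (u + 1) := by
    intro u _
    rw [Nat.choose_succ_succ]
    push_cast
    ring
  rw [e1, Finset.sum_congr rfl e4, Finset.sum_add_distrib]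
  simp only [mul_add, Finset.sum_add_distrib]
  have e5 : ∑ u ∈ Finset.range (k + 1), ((k.choose (u + 1) : ℝ) * T (u + 1))
      = ∑ u ∈ Finset.range (k + 1), (k.choose u : ℝ) * T u - (k.choose 0 : ℝ) * T 0 := by
    rw [← e3, e2]; ring
  rw [e5]
  simp [Nat.choose_zero_right]
  ring


/-- Repeated differentiation under the integral sign: if `f(e, x)` vanishes for `|e| > R` and
has bounded, jointly continuous mixed partial derivatives `D u v = ∂_e^u ∂_x^v f` for
`u + v ≤ r`, and `h` is bounded and measurable, then `g(x) = ∫ h(y) f(y − x, x) dy` is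
`r`-times differentiable and its `r`-th derivative is the binomial expansion over mixed
partials. -/
theorem stmt11 (r : ℕ) (hr : 1 ≤ r) (R : ℝ) (hR : 0 < R)
    (f : ℝ × ℝ → ℝ) (hsupp : ∀ e x : ℝ, R < |e| → f (e, x) = 0)
    (D : ℕ → ℕ → ℝ × ℝ → ℝ) (hD0 : D 0 0 = f)
    (hDe : ∀ u v : ℕ, u + 1 + v ≤ r →
      ∀ e x : ℝ, HasDerivAt (fun e' => D u v (e', x)) (D (u + 1) v (e, x)) e)
    (hDx : ∀ u v : ℕ, u + (v + 1) ≤ r →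
      ∀ e x : ℝ, HasDerivAt (fun x' => D u v (e, x')) (D u (v + 1) (e, x)) x)
    (hDbdd : ∀ u v : ℕ, u + v ≤ r → ∃ c : ℝ, ∀ q : ℝ × ℝ, |D u v q| ≤ c)
    (hDc : ∀ u v : ℕ, u + v ≤ r → Continuous (D u v))
    (h : ℝ → ℝ) (hhm : Measurable h) (hhb : ∃ c : ℝ, ∀ x, |h x| ≤ c)
    (g : ℝ → ℝ) (hg : g = fun x => ∫ y : ℝ, h y * f (y - x, x)) :
    (∀ k < r, Differentiable ℝ (iteratedDeriv k g)) ∧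
      ∀ x : ℝ, iteratedDeriv r g x =
        ∑ u ∈ Finset.range (r + 1),
          (r.choose u : ℝ) * (-1 : ℝ) ^ u * ∫ y : ℝ, h y * D u (r - u) (y - x, x) := by
  classical
  obtain ⟨ch, hch⟩ := hhb
  have hch0 : 0 ≤ ch := (abs_nonneg (h 0)).trans (hch 0)
  -- all mixed partials vanish outside the support
  have vanish : ∀ u v : ℕ, u + v ≤ r → ∀ e x : ℝ, R < |e| → D u v (e, x) = 0 := by
    intro u
    induction u with
    | zero =>
      intro v
      induction v with
      | zero => intro _ e x he; rw [hD0]; exact hsupp e x he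
      | succ v ih =>
        intro hle e x he
        have h2 : HasDerivAt (fun x' => D 0 v (e, x')) 0 x :=
          (hasDerivAt_const x (0 : ℝ)).congr_of_eventuallyEq
            (Filter.Eventually.of_forall fun x' => ih (by omega) e x' he)
        exact (hDx 0 v (by omega) e x).unique h2
    | succ u ihu =>
      intro v hle e x he
      have hopen : IsOpen {e' : ℝ | R < |e'|} := isOpen_lt continuous_const continuous_abs
      have hmem : {e' : ℝ | R < |e'|} ∈ 𝓝 e := hopen.mem_nhds he
      have h2 : HasDerivAt (fun e' => D u v (e', x)) 0 e :=
        (hasDerivAt_const e (0 : ℝ)).congr_of_eventuallyEq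
          (Filter.eventually_of_mem hmem fun e' he' => ihu v (by omega) e' x he')
      exact (hDe u v (by omega) e x).unique h2
  -- measurability of the integrands
  have meas : ∀ u v : ℕ, u + v ≤ r → ∀ x : ℝ,
      AEStronglyMeasurable (fun y => h y * D u v (y - x, x)) volume := by
    intro u v hle x
    have hc : Continuous fun y : ℝ => D u v (y - x, x) :=
      (hDc u v hle).comp ((continuous_id.sub continuous_const).prodMk continuous_const)
    exact (hhm.mul hc.measurable).aestronglyMeasurable
  -- integrability of the integrands
  have intg : ∀ u v : ℕ, u + v ≤ r → ∀ x : ℝ,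
      Integrable (fun y => h y * D u v (y - x, x)) volume := by
    intro u v hle x
    obtain ⟨c, hc⟩ := hDbdd u v hle
    refine Integrable.mono' (g := (Icc (x - R) (x + R)).indicator fun _ => ch * c)
      ?_ (meas u v hle x) ?_
    · exact (integrable_indicator_iff measurableSet_Icc).2
        (integrableOn_const measure_Icc_lt_top.ne)
    · refine Filter.Eventually.of_forall fun y => ?_
      by_cases hy : y ∈ Icc (x - R) (x + R)
      · rw [indicator_of_mem hy, Real.norm_eq_abs, abs_mul]
        exact mul_le_mul (hch y) (hc _) (abs_nonneg _) hch0
      · rw [indicator_of_notMem hy]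
        have hy' : R < |y - x| := by
          simp only [mem_Icc, not_and_or, not_le] at hy
          rcases hy with hy | hy
          · exact lt_abs.2 (Or.inr (by linarith))
          · exact lt_abs.2 (Or.inl (by linarith))
        rw [vanish u v hle (y - x) x hy', mul_zero]
        simp
  -- the integrals
  set I : ℕ → ℕ → ℝ → ℝ := fun u v x => ∫ y : ℝ, h y * D u v (y - x, x) with hI
  -- differentiation under the integral sign
  have keyderiv : ∀ u v : ℕ, u + v + 1 ≤ r → ∀ x₀ : ℝ,
      HasDerivAt (I u v) (-I (u + 1) v x₀ + I u (v + 1) x₀) x₀ := by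
    intro u v hle x₀
    obtain ⟨c1, hc1⟩ := hDbdd (u + 1) v (by omega)
    obtain ⟨c2, hc2⟩ := hDbdd u (v + 1) (by omega)
    have key := hasDerivAt_integral_of_dominated_loc_of_deriv_le (μ := volume) (𝕜 := ℝ)
      (F := fun x y => h y * D u v (y - x, x))
      (F' := fun x y => h y * (-D (u + 1) v (y - x, x) + D u (v + 1) (y - x, x)))
      (x₀ := x₀)
      (bound := (Icc (x₀ - (R + 1)) (x₀ + (R + 1))).indicator fun _ => ch * (c1 + c2))
      (Metric.ball_mem_nhds x₀ one_pos)
      (Filter.Eventually.of_forall fun x => meas u v (by omega) x)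
      (intg u v (by omega) x₀)
      ?_ ?_ ?_ ?_
    · have heq : (∫ y : ℝ, h y * (-D (u + 1) v (y - x₀, x₀) + D u (v + 1) (y - x₀, x₀)))
          = -I (u + 1) v x₀ + I u (v + 1) x₀ := by
        have e : (fun y => h y * (-D (u + 1) v (y - x₀, x₀) + D u (v + 1) (y - x₀, x₀)))
            = fun y => h y * D u (v + 1) (y - x₀, x₀) - h y * D (u + 1) v (y - x₀, x₀) := by
          funext y; ring
        rw [e, integral_sub (intg u (v + 1) (by omega) x₀) (intg (u + 1) v (by omega) x₀)]
        simp only [hI]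
        ring
      rw [← heq]
      exact key.2
    · -- measurability of F' x₀
      have hc : Continuous fun y : ℝ =>
          -D (u + 1) v (y - x₀, x₀) + D u (v + 1) (y - x₀, x₀) := by
        have h1 : Continuous fun y : ℝ => (y - x₀, x₀) :=
          (continuous_id.sub continuous_const).prodMk continuous_const
        exact (((hDc (u + 1) v (by omega)).comp h1).neg).add ((hDc u (v + 1) (by omega)).comp h1)
      exact (hhm.mul hc.measurable).aestronglyMeasurable
    · -- bound
      refine Filter.Eventually.of_forall fun y => fun x hx => ?_
      rw [Metric.mem_ball, Real.dist_eq] at hx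
      beta_reduce
      by_cases hy : y ∈ Icc (x₀ - (R + 1)) (x₀ + (R + 1))
      · rw [indicator_of_mem hy, Real.norm_eq_abs, abs_mul]
        refine mul_le_mul (hch y) ?_ (abs_nonneg _) hch0
        calc |(-D (u + 1) v (y - x, x) + D u (v + 1) (y - x, x))|
            ≤ |(-D (u + 1) v (y - x, x))| + |D u (v + 1) (y - x, x)| := abs_add_le _ _
          _ ≤ c1 + c2 := by rw [abs_neg]; exact add_le_add (hc1 _) (hc2 _)
      · rw [indicator_of_notMem hy]
        have hy0 : R + 1 < |y - x₀| := by
          simp only [mem_Icc, not_and_or, not_le] at hy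
          rcases hy with hy | hy
          · exact lt_abs.2 (Or.inr (by linarith))
          · exact lt_abs.2 (Or.inl (by linarith))
        have hyx : R < |y - x| := by
          have htri : |y - x₀| ≤ |y - x| + |x - x₀| := by
            calc |y - x₀| = |(y - x) + (x - x₀)| := by ring_nf
              _ ≤ |y - x| + |x - x₀| := abs_add_le _ _
          linarith
        rw [vanish (u + 1) v (by omega) (y - x) x hyx, vanish u (v + 1) (by omega) (y - x) x hyx]
        simp
    · -- bound integrable
      exact (integrable_indicator_iff measurableSet_Icc).2
        (integrableOn_const measure_Icc_lt_top.ne)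
    · -- differentiability
      refine Filter.Eventually.of_forall fun y => fun x _ => ?_
      exact (myHelper (hDe u v (by omega)) (hDx u v (by omega))
        (hDc (u + 1) v (by omega)) y x).const_mul (h y)
  -- derivative of the k-th binomial sum
  have Gderiv : ∀ k : ℕ, k + 1 ≤ r → ∀ x : ℝ,
      HasDerivAt (fun x' => ∑ u ∈ Finset.range (k + 1),
          (k.choose u : ℝ) * (-1 : ℝ) ^ u * I u (k - u) x')
        (∑ u ∈ Finset.range (k + 2),
          ((k + 1).choose u : ℝ) * (-1 : ℝ) ^ u * I u (k + 1 - u) x) x := by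
    intro k hk x
    have hterm : ∀ u ∈ Finset.range (k + 1),
        HasDerivAt (fun x' => (k.choose u : ℝ) * (-1 : ℝ) ^ u * I u (k - u) x')
          ((k.choose u : ℝ) * ((-1 : ℝ) ^ u * I u (k + 1 - u) x +
            (-1 : ℝ) ^ (u + 1) * I (u + 1) (k + 1 - (u + 1)) x)) x := by
      intro u hu
      have huk : u ≤ k := Nat.lt_succ_iff.1 (Finset.mem_range.1 hu)
      have hd := (keyderiv u (k - u) (by omega) x).const_mul ((k.choose u : ℝ) * (-1 : ℝ) ^ u)
      convert hd using 1
      case e'_4 => rfl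
      case e'_5 => rfl
      have h1 : k + 1 - (u + 1) = k - u := by omega
      have h2 : k - u + 1 = k + 1 - u := by omega
      rw [h1, ← h2, pow_succ]
      ring
    have hsum := HasDerivAt.sum hterm
    convert hsum using 1
    case e'_4 => rfl
    case e'_5 => rfl
    case e'_8 => ext y; simp only [Finset.sum_apply]
    have e0 : ∑ u ∈ Finset.range (k + 2), ((k + 1).choose u : ℝ) * (-1 : ℝ) ^ u * I u (k + 1 - u) x
        = ∑ u ∈ Finset.range (k + 2), ((k + 1).choose u : ℝ) * ((-1 : ℝ) ^ u * I u (k + 1 - u) x) :=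
      Finset.sum_congr rfl fun u _ => by ring
    rw [e0, ← myPascal k (fun w => (-1 : ℝ) ^ w * I w (k + 1 - w) x)]
  -- main induction
  have main : ∀ k : ℕ, k ≤ r → iteratedDeriv k g =
      fun x => ∑ u ∈ Finset.range (k + 1), (k.choose u : ℝ) * (-1 : ℝ) ^ u * I u (k - u) x := by
    intro k
    induction k with
    | zero =>
      intro _
      funext x
      simp [iteratedDeriv_zero, hg, hI, hD0]
    | succ k ih =>
      intro hk
      funext x
      rw [iteratedDeriv_succ, ih (by omega)]
      exact (Gderiv k hk x).deriv
  constructor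
  · intro k hk
    rw [main k (le_of_lt hk)]
    exact fun x => (Gderiv k hk x).differentiableAt
  · intro x
    rw [main r le_rfl]
end

section
/- Let (Ω, 𝒜, μ) be a probability space and let X, e : Ω → ℝ be bounded random variables. Let q be a natural number, and suppose that for each j = 1, …, q there is a polynomial function m_j : ℝ → ℝ of degree at most j such that m_j ∘ X is a version of the conditional expectation of e^j given the σ-algebra generated by X (with m_0 := 1). Let g* : ℝ → ℝ be a polynomial function of degree at most q. Then there exists a polynomial function G : ℝ → ℝ of degree at most q such that G ∘ X is a version of the conditional expectation of g*(X + e) given the σ-algebra generated by X; explicitly, writing g*(x) = Σ_{j=0}^{q} a_j x^j, one may take G(x) = Σ_{j=0}^{q} a_j Σ_{k=0}^{j} binom(j, k) x^{j−k} m_k(x). -/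
open MeasureTheory Filter Set Topology

private lemma bdd_integrable {Ω : Type*} [MeasurableSpace Ω] {μ : Measure Ω}
    [IsFiniteMeasure μ] {f : Ω → ℝ} (hf : Measurable f) {c : ℝ} (hb : ∀ ω, |f ω| ≤ c) :
    Integrable f μ :=
  ⟨hf.aestronglyMeasurable, HasFiniteIntegral.of_bounded (C := c) (ae_of_all _ hb)⟩

private lemma ae_sum_congr {Ω ι : Type*} [MeasurableSpace Ω] {μ : Measure Ω}
    {s : Finset ι} {f g : ι → Ω → ℝ} (h : ∀ i ∈ s, f i =ᵐ[μ] g i) :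
    (∑ i ∈ s, f i) =ᵐ[μ] ∑ i ∈ s, g i := by
  classical
  revert h
  refine Finset.induction_on s (by simp) ?_
  intro i t hi ih h
  rw [Finset.sum_insert hi, Finset.sum_insert hi]
  exact (h i (Finset.mem_insert_self i t)).add
    (ih fun j hj => h j (Finset.mem_insert_of_mem hj))

/-- Parametric polynomial specification: if the latent conditional mean `g*` is a polynomial of
degree at most `q` and the conditional moments `E[e^j | X] = m_j(X)` are polynomials of degree
at most `j` for `j = 1, …, q` (with `m₀ := 1`), then the conditional mean of `g*(X + e)` given
`X` is the polynomial `G(x) = Σ_j a_j Σ_k binom(j,k) x^{j−k} m_k(x)` of degree at most `q`. -/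
theorem stmt12 {Ω : Type*} [MeasurableSpace Ω] (μ : Measure Ω) [IsProbabilityMeasure μ]
    (X e : Ω → ℝ) (hX : Measurable X) (he : Measurable e)
    (hXb : ∃ c : ℝ, ∀ ω, |X ω| ≤ c) (heb : ∃ c : ℝ, ∀ ω, |e ω| ≤ c)
    (q : ℕ) (m : ℕ → ℝ → ℝ) (hm0 : ∀ x, m 0 x = 1)
    (hmpoly : ∀ j, 1 ≤ j → j ≤ q →
      ∃ p : Polynomial ℝ, p.natDegree ≤ j ∧ ∀ x, m j x = p.eval x)
    (hmcond : ∀ j, 1 ≤ j → j ≤ q →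
      (fun ω => m j (X ω)) =ᵐ[μ] μ[(fun ω => e ω ^ j) | MeasurableSpace.comap X (borel ℝ)])
    (a : ℕ → ℝ) (gstar : ℝ → ℝ)
    (hgstar : ∀ x, gstar x = ∑ j ∈ Finset.range (q + 1), a j * x ^ j)
    (G : ℝ → ℝ)
    (hG : G = fun x => ∑ j ∈ Finset.range (q + 1), a j *
      ∑ k ∈ Finset.range (j + 1), (j.choose k : ℝ) * x ^ (j - k) * m k x) :
    (∃ P : Polynomial ℝ, P.natDegree ≤ q ∧ ∀ x, G x = P.eval x) ∧
      (fun ω => G (X ω)) =ᵐ[μ]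
        μ[(fun ω => gstar (X ω + e ω)) | MeasurableSpace.comap X (borel ℝ)] := by
  classical
  obtain ⟨cX, hcX⟩ := hXb
  obtain ⟨ce, hce⟩ := heb
  -- replace bounds by nonnegative ones
  have hcX' : ∀ ω, |X ω| ≤ |cX| := fun ω => (hcX ω).trans (le_abs_self cX)
  have hce' : ∀ ω, |e ω| ≤ |ce| := fun ω => (hce ω).trans (le_abs_self ce)
  have hcXnn : (0:ℝ) ≤ |cX| := abs_nonneg cX
  have hcenn : (0:ℝ) ≤ |ce| := abs_nonneg ce
  -- choose representing polynomials for m k, k ≤ q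
  have hpex : ∀ k : ℕ, ∃ p : Polynomial ℝ,
      k ≤ q → p.natDegree ≤ k ∧ ∀ x, m k x = p.eval x := by
    intro k
    by_cases hk : k ≤ q
    · rcases Nat.eq_zero_or_pos k with h0 | h1
      · exact ⟨1, fun _ => ⟨by simp, by simp [h0, hm0]⟩⟩
      · obtain ⟨p, hp1, hp2⟩ := hmpoly k h1 hk
        exact ⟨p, fun _ => ⟨hp1, hp2⟩⟩
    · exact ⟨0, fun h => absurd h hk⟩
  choose p hp using hpex
  -- the polynomial representing G
  have hpoly : ∃ P : Polynomial ℝ, P.natDegree ≤ q ∧ ∀ x, G x = P.eval x := by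
    refine ⟨∑ j ∈ Finset.range (q + 1), Polynomial.C (a j) *
      ∑ k ∈ Finset.range (j + 1), Polynomial.C ((j.choose k : ℝ)) *
        Polynomial.X ^ (j - k) * p k, ?_, ?_⟩
    · refine Polynomial.natDegree_sum_le_of_forall_le _ _ fun j hj => ?_
      have hjq : j ≤ q := Nat.lt_succ_iff.mp (Finset.mem_range.mp hj)
      calc (Polynomial.C (a j) * ∑ k ∈ Finset.range (j + 1), Polynomial.C ((j.choose k : ℝ)) *
            Polynomial.X ^ (j - k) * p k).natDegree
          ≤ (∑ k ∈ Finset.range (j + 1), Polynomial.C ((j.choose k : ℝ)) *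
            Polynomial.X ^ (j - k) * p k).natDegree := Polynomial.natDegree_C_mul_le _ _
        _ ≤ j := ?_
        _ ≤ q := hjq
      refine Polynomial.natDegree_sum_le_of_forall_le _ _ fun k hk => ?_
      have hkj : k ≤ j := Nat.lt_succ_iff.mp (Finset.mem_range.mp hk)
      calc (Polynomial.C ((j.choose k : ℝ)) * Polynomial.X ^ (j - k) * p k).natDegree
          ≤ (Polynomial.C ((j.choose k : ℝ)) * Polynomial.X ^ (j - k)).natDegree
              + (p k).natDegree := Polynomial.natDegree_mul_le
        _ ≤ (j - k) + k := by
            gcongr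
            · calc (Polynomial.C ((j.choose k : ℝ)) * Polynomial.X ^ (j - k)).natDegree
                  ≤ (Polynomial.X ^ (j - k) : Polynomial ℝ).natDegree :=
                    Polynomial.natDegree_C_mul_le _ _
                _ ≤ j - k := by simp
            · exact (hp k (hkj.trans hjq)).1
        _ = j := Nat.sub_add_cancel hkj
    · intro x
      rw [hG]
      simp only [Polynomial.eval_finset_sum, Polynomial.eval_mul, Polynomial.eval_C,
        Polynomial.eval_pow, Polynomial.eval_X]
      refine Finset.sum_congr rfl fun j hj => ?_
      have hjq : j ≤ q := Nat.lt_succ_iff.mp (Finset.mem_range.mp hj)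
      congr 1
      refine Finset.sum_congr rfl fun k hk => ?_
      have hkj : k ≤ j := Nat.lt_succ_iff.mp (Finset.mem_range.mp hk)
      rw [(hp k (hkj.trans hjq)).2 x]
  refine ⟨hpoly, ?_⟩
  -- conditional expectation part
  have hle : MeasurableSpace.comap X (borel ℝ) ≤ ‹MeasurableSpace Ω› := by
    rw [← BorelSpace.measurable_eq (α := ℝ)]
    exact hX.comap_le
  haveI : SigmaFinite (μ.trim hle) := by
    haveI : IsFiniteMeasure (μ.trim hle) := isFiniteMeasure_trim hle
    infer_instance
  -- strong measurability of powers of X wrt (MeasurableSpace.comap X (borel ℝ))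
  have hXm : Measurable[MeasurableSpace.comap X (borel ℝ)] X := Measurable.of_comap_le le_rfl
  have hXk : ∀ k : ℕ, StronglyMeasurable[(MeasurableSpace.comap X (borel ℝ))] (fun ω => X ω ^ k) :=
    fun k => (hXm.pow_const k).stronglyMeasurable
  -- integrability of the basic terms
  have hint : ∀ j k : ℕ, Integrable (fun ω => X ω ^ (j - k) * e ω ^ k) μ := by
    intro j k
    refine bdd_integrable ((hX.pow_const _).mul (he.pow_const _))
      (c := |cX| ^ (j - k) * |ce| ^ k) fun ω => ?_
    rw [abs_mul, abs_pow, abs_pow]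
    exact mul_le_mul (pow_le_pow_left₀ (abs_nonneg _) (hcX' ω) _)
      (pow_le_pow_left₀ (abs_nonneg _) (hce' ω) _) (by positivity) (by positivity)
  have hintek : ∀ k : ℕ, Integrable (fun ω => e ω ^ k) μ := by
    intro k
    refine bdd_integrable (he.pow_const _) (c := |ce| ^ k) fun ω => ?_
    rw [abs_pow]; exact pow_le_pow_left₀ (abs_nonneg _) (hce' ω) _
  -- per-term conditional expectation
  have hterm : ∀ j k : ℕ, k ≤ j → j ≤ q →
      μ[(fun ω => X ω ^ (j - k) * e ω ^ k) | (MeasurableSpace.comap X (borel ℝ))] =ᵐ[μ]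
        (fun ω => X ω ^ (j - k) * m k (X ω)) := by
    intro j k hkj hjq
    rcases Nat.eq_zero_or_pos k with h0 | h1
    · subst h0
      simp only [Nat.sub_zero, pow_zero, mul_one, hm0]
      rw [condExp_of_stronglyMeasurable hle (hXk j)
        (by simpa using hint j 0)]
    · have hmul := condExp_mul_of_stronglyMeasurable_left (m := (MeasurableSpace.comap X (borel ℝ))) (μ := μ)
        (f := fun ω => X ω ^ (j - k)) (g := fun ω => e ω ^ k)
        (hXk (j - k)) (hint j k) (hintek k)
      refine hmul.trans ?_
      have := (hmcond k h1 (hkj.trans hjq)).symm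
      filter_upwards [this] with ω hω
      simp only [Pi.mul_apply]
      rw [hω]
  -- rewrite the target as a double sum of functions
  have htarget : (fun ω => gstar (X ω + e ω)) =
      ∑ j ∈ Finset.range (q + 1), ∑ k ∈ Finset.range (j + 1),
        (a j * (j.choose k : ℝ)) • (fun ω => X ω ^ (j - k) * e ω ^ k) := by
    funext ω
    simp only [Finset.sum_apply, Pi.smul_apply, smul_eq_mul]
    rw [hgstar]
    refine Finset.sum_congr rfl fun j hj => ?_
    rw [add_comm (X ω) (e ω), add_pow, Finset.mul_sum]
    refine Finset.sum_congr rfl fun k hk => ?_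
    ring
  -- integrability of the inner sums
  have hintinner : ∀ j : ℕ, Integrable
      (∑ k ∈ Finset.range (j + 1),
        (a j * (j.choose k : ℝ)) • (fun ω => X ω ^ (j - k) * e ω ^ k)) μ :=
    fun j => integrable_finset_sum' _ fun k _ => ((hint j k).smul (a j * (j.choose k : ℝ)))
  -- compute the conditional expectation of the target
  have hmain : μ[(fun ω => gstar (X ω + e ω)) | (MeasurableSpace.comap X (borel ℝ))] =ᵐ[μ] (fun ω => G (X ω)) := by
    rw [htarget]
    refine (condExp_finsetSum (fun j _ => hintinner j) _).trans ?_
    have hGrw : (fun ω => G (X ω)) =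
        ∑ j ∈ Finset.range (q + 1), ∑ k ∈ Finset.range (j + 1),
          (a j * (j.choose k : ℝ)) • (fun ω => X ω ^ (j - k) * m k (X ω)) := by
      funext ω
      simp only [Finset.sum_apply, Pi.smul_apply, smul_eq_mul, hG]
      refine Finset.sum_congr rfl fun j hj => ?_
      rw [Finset.mul_sum]
      refine Finset.sum_congr rfl fun k hk => ?_
      ring
    rw [hGrw]
    refine ae_sum_congr fun j hj => ?_
    have hjq : j ≤ q := Nat.lt_succ_iff.mp (Finset.mem_range.mp hj)
    refine (condExp_finsetSum (fun k _ =>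
      ((hint j k).smul (a j * (j.choose k : ℝ)))) _).trans ?_
    refine ae_sum_congr fun k hk => ?_
    have hkj : k ≤ j := Nat.lt_succ_iff.mp (Finset.mem_range.mp hk)
    refine (condExp_smul (a j * (j.choose k : ℝ)) _ _).trans ?_
    filter_upwards [hterm j k hkj hjq] with ω hω
    simp only [Pi.smul_apply, smul_eq_mul, hω]
  exact hmain.symm
end
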